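/- For any tree T of order n ≥ 2, the outer-connected domination number of T is strictly less than the outer-connected domination number of the middle graph M(T). -/

import Mathlib

open SimpleGraph

/-- `S` is a dominating set of `H`: every vertex is in `S` or adjacent to a vertex of `S`. -/
def IsDomSet {V : Type*} (H : SimpleGraph V) (S : Set V) : Prop :=
  ∀ v : V, ∃ u ∈ S, u = v ∨ H.Adj u v

/-- The connected domination number: minimum size of a dominating set inducing a
connected subgraph. -/
noncomputable def connDomNum {V : Type*} (H : SimpleGraph V) : ℕ :=
  sInf {k | ∃ S : Set V, IsDomSet H S ∧ (H.induce S).Connected ∧ S.ncard = k}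

/-- The outer-connected domination number: minimum size of a dominating set whose
complement induces a connected subgraph. -/
noncomputable def outConnDomNum {V : Type*} (H : SimpleGraph V) : ℕ :=
  sInf {k | ∃ S : Set V, IsDomSet H S ∧ (H.induce Sᶜ).Connected ∧ S.ncard = k}

/-- The middle graph `M(G)`: vertices are `V(G) ∪ E(G)`; a vertex is adjacent to its
incident edges, and two edges are adjacent iff they share a vertex. -/
def middleGraph {V : Type*} (G : SimpleGraph V) : SimpleGraph (V ⊕ G.edgeSet) where
  Adj x y :=
    match x, y with
    | Sum.inl _, Sum.inl _ => False
    | Sum.inl v, Sum.inr e => v ∈ (e : Sym2 V)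
    | Sum.inr e, Sum.inl v => v ∈ (e : Sym2 V)
    | Sum.inr e, Sum.inr f => e ≠ f ∧ ∃ v, v ∈ (e : Sym2 V) ∧ v ∈ (f : Sym2 V)
  symm.symm := by
    rintro (v | e) (w | f) h
    · exact h.elim
    · exact h
    · exact h
    · exact ⟨Ne.symm h.1, h.2.imp fun v hv => ⟨hv.2, hv.1⟩⟩
  loopless.irrefl := by
    rintro (v | e) h
    · exact h
    · exact h.1 rfl

/-- The edge cover number `ρ(G)`: minimum number of edges covering all vertices. -/
noncomputable def edgeCoverNum {V : Type*} (G : SimpleGraph V) : ℕ :=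
  sInf {k | ∃ C : Set (Sym2 V), C ⊆ G.edgeSet ∧ (∀ v : V, ∃ e ∈ C, v ∈ e) ∧ C.ncard = k}

/-- The wheel graph with hub `none` and a cycle on `ZMod n` (so `n + 1` vertices). -/
def wheelGraph (n : ℕ) : SimpleGraph (Option (ZMod n)) where
  Adj x y :=
    match x, y with
    | none, none => False
    | none, some _ => True
    | some _, none => True
    | some i, some j => i ≠ j ∧ (i - j = 1 ∨ j - i = 1)
  symm.symm := by
    rintro (_ | i) (_ | j) h
    · exact h.elim
    · trivial
    · trivial
    · exact ⟨h.1.symm, h.2.symm⟩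
  loopless.irrefl := by
    rintro (_ | i) h
    · exact h
    · exact h.1 rfl

/-- The friendship graph `F n`: `n` triangles sharing the common vertex `none`. -/
def friendshipGraph (n : ℕ) : SimpleGraph (Option (Fin n × Fin 2)) where
  Adj x y :=
    match x, y with
    | none, none => False
    | none, some _ => True
    | some _, none => True
    | some (i, a), some (j, b) => i = j ∧ a ≠ b
  symm.symm := by
    rintro (_ | ⟨i, a⟩) (_ | ⟨j, b⟩) h
    · exact h.elim
    · trivial
    · trivial
    · exact ⟨h.1.symm, h.2.symm⟩
  loopless.irrefl := by
    rintro (_ | ⟨i, a⟩) h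
    · exact h
    · exact h.2 rfl

/-- The corona `G ∘ K₁`: each vertex `Sum.inl v` of `G` gets a pendant vertex `Sum.inr v`. -/
def corona {V : Type*} (G : SimpleGraph V) : SimpleGraph (V ⊕ V) where
  Adj x y :=
    match x, y with
    | Sum.inl v, Sum.inl w => G.Adj v w
    | Sum.inl v, Sum.inr w => v = w
    | Sum.inr v, Sum.inl w => v = w
    | Sum.inr _, Sum.inr _ => False
  symm.symm := by
    rintro (v | v) (w | w) h
    · exact G.adj_symm h
    · exact h.symm
    · exact h.symm
    · exact h.elim
  loopless.irrefl := by
    rintro (v | v) h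
    · exact G.loopless.irrefl v h
    · exact h

/-- The 2-corona `G ∘ P₂`: each vertex `Sum.inl v` of `G` gets a pendant path
`Sum.inl v — Sum.inr (Sum.inl v) — Sum.inr (Sum.inr v)`. -/
def corona2 {V : Type*} (G : SimpleGraph V) : SimpleGraph (V ⊕ (V ⊕ V)) where
  Adj x y :=
    match x, y with
    | Sum.inl v, Sum.inl w => G.Adj v w
    | Sum.inl v, Sum.inr (Sum.inl w) => v = w
    | Sum.inr (Sum.inl v), Sum.inl w => v = w
    | Sum.inr (Sum.inl v), Sum.inr (Sum.inr w) => v = w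
    | Sum.inr (Sum.inr v), Sum.inr (Sum.inl w) => v = w
    | _, _ => False
  symm.symm := by
    rintro (v | v | v) (w | w | w) h
    · exact G.adj_symm h
    · exact h.symm
    · exact h.elim
    · exact h.symm
    · exact h.elim
    · exact h.symm
    · exact h.elim
    · exact h.symm
    · exact h.elim
  loopless.irrefl := by
    rintro (v | v | v) h
    · exact G.loopless.irrefl v h
    · exact h
    · exact h

/-- The join `G + K̄ p` of `G` with the empty graph on `p` vertices. -/
def joinEmpty {V : Type*} (G : SimpleGraph V) (p : ℕ) : SimpleGraph (V ⊕ Fin p) where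
  Adj x y :=
    match x, y with
    | Sum.inl v, Sum.inl w => G.Adj v w
    | Sum.inl _, Sum.inr _ => True
    | Sum.inr _, Sum.inl _ => True
    | Sum.inr _, Sum.inr _ => False
  symm.symm := by
    rintro (v | v) (w | w) h
    · exact G.adj_symm h
    · trivial
    · trivial
    · exact h.elim
  loopless.irrefl := by
    rintro (v | v) h
    · exact G.loopless.irrefl v h
    · exact h


section AuxOCD

variable {V : Type*}

/-- Endpoint set of a vertex of the middle graph. -/
def epSet (T : SimpleGraph V) : V ⊕ T.edgeSet → Set V
  | Sum.inl v => {v}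
  | Sum.inr e => {u | u ∈ (e : Sym2 V)}

/-- The subgraph of `T` consisting of the edges not in `S` (viewed inside the middle graph). -/
def subGraph (T : SimpleGraph V) (S : Set (V ⊕ T.edgeSet)) : SimpleGraph V where
  Adj a b := a ≠ b ∧ ∃ e : T.edgeSet, (e : Sym2 V) = s(a, b) ∧ (Sum.inr e : V ⊕ T.edgeSet) ∉ S
  symm.symm := by
    rintro a b ⟨h, e, he, hs⟩
    exact ⟨h.symm, e, he.trans Sym2.eq_swap, hs⟩
  loopless.irrefl := fun a h => h.1 rfl

lemma reach_of_mem (T : SimpleGraph V) (S : Set (V ⊕ T.edgeSet)) {e : T.edgeSet}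
    (he : (Sum.inr e : V ⊕ T.edgeSet) ∉ S) {a b : V}
    (ha : a ∈ (e : Sym2 V)) (hb : b ∈ (e : Sym2 V)) :
    (subGraph T S).Reachable a b := by
  by_cases hab : a = b
  · subst hab; exact Reachable.refl a
  · exact SimpleGraph.Adj.reachable ⟨hab, e, (Sym2.mem_and_mem_iff hab).mp ⟨ha, hb⟩, he⟩

lemma step_proj (T : SimpleGraph V) (S : Set (V ⊕ T.edgeSet)) {x y : V ⊕ T.edgeSet}
    (hx : x ∉ S) (hadj : (middleGraph T).Adj x y) {a : V} (ha : a ∈ epSet T x) :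
    ∃ c ∈ epSet T y, (subGraph T S).Reachable a c := by
  cases x with
  | inl v =>
    cases y with
    | inl w => exact hadj.elim
    | inr e =>
      have hav : a = v := ha
      exact ⟨v, hadj, by rw [hav]⟩
  | inr e =>
    cases y with
    | inl w => exact ⟨w, rfl, reach_of_mem T S hx ha hadj⟩
    | inr f =>
      obtain ⟨hne, u, hue, huf⟩ := hadj
      exact ⟨u, huf, reach_of_mem T S hx ha hue⟩

lemma walk_proj (T : SimpleGraph V) (S : Set (V ⊕ T.edgeSet)) :
    ∀ {x y : ↥(Sᶜ)}, ((middleGraph T).induce Sᶜ).Walk x y →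
      ∀ {a b : V}, a ∈ epSet T x.1 → b ∈ epSet T y.1 → (subGraph T S).Reachable a b := by
  intro x y W
  induction W with
  | nil =>
    rename_i z
    intro a b ha hb
    obtain ⟨z, hz⟩ := z
    cases z with
    | inl v =>
      have ha' : a = v := ha
      have hb' : b = v := hb
      rw [ha', hb']
    | inr e => exact reach_of_mem T S hz ha hb
  | cons h W ih =>
    rename_i u v w
    intro a b ha hb
    have hadj : (middleGraph T).Adj u.1 v.1 := h
    obtain ⟨c, hc, hr⟩ := step_proj T S u.2 hadj ha
    exact hr.trans (ih hc hb)

end AuxOCD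

theorem stmt3 {V : Type*} [Fintype V] (T : SimpleGraph V)
    (h2 : 2 ≤ Fintype.card V) (hT : T.IsTree) :
    outConnDomNum T < outConnDomNum (middleGraph T) := by
  classical
  set n := Fintype.card V with hn
  have hneV : Nonempty V := Fintype.card_pos_iff.mp (by omega)
  obtain ⟨v0⟩ := hneV
  -- v0 has a neighbor
  obtain ⟨w0, hvw⟩ : ∃ w, T.Adj v0 w := by
    obtain ⟨w, hw⟩ := Fintype.exists_ne_of_one_lt_card (by omega) v0
    obtain ⟨W⟩ := hT.isConnected.preconnected v0 w
    cases W with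
    | nil => exact absurd rfl hw
    | cons h _ => exact ⟨_, h⟩
  obtain ⟨e0, he0⟩ : ∃ e : T.edgeSet, (e : Sym2 V) = s(v0, w0) := ⟨⟨s(v0, w0), hvw⟩, rfl⟩
  -- Part 1 : outConnDomNum T ≤ n - 1
  have h1 : outConnDomNum T ≤ n - 1 := by
    apply Nat.sInf_le
    refine ⟨{v0}ᶜ, ?_, ?_, ?_⟩
    · intro x
      by_cases hx : x = v0
      · subst hx
        exact ⟨w0, by simp [hvw.ne'], Or.inr hvw.symm⟩
      · exact ⟨x, hx, Or.inl rfl⟩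
    · rw [compl_compl, SimpleGraph.connected_iff]
      refine ⟨fun x y => ?_, ⟨⟨v0, rfl⟩⟩⟩
      have hxy : x = y := Subtype.ext (x.2.trans y.2.symm)
      rw [hxy]
    · have h := Set.ncard_add_ncard_compl ({v0} : Set V)
      rw [Set.ncard_singleton, Nat.card_eq_fintype_card] at h
      omega
  -- Part 2 : n ≤ outConnDomNum (middleGraph T)
  have h2 : n ≤ outConnDomNum (middleGraph T) := by
    apply le_csInf
    · -- nonempty: complement of a single vertex
      refine ⟨({(Sum.inr e0 : V ⊕ T.edgeSet)}ᶜ : Set _).ncard,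
        {(Sum.inr e0 : V ⊕ T.edgeSet)}ᶜ, ?_, ?_, rfl⟩
      · intro x
        by_cases hx : x = Sum.inr e0
        · subst hx
          refine ⟨Sum.inl v0, by simp, Or.inr ?_⟩
          show v0 ∈ (e0 : Sym2 V)
          rw [he0]
          exact Sym2.mem_mk_left v0 w0
        · exact ⟨x, hx, Or.inl rfl⟩
      · rw [compl_compl, SimpleGraph.connected_iff]
        refine ⟨fun x y => ?_, ⟨⟨Sum.inr e0, rfl⟩⟩⟩
        have hxy : x = y := Subtype.ext (x.2.trans y.2.symm)
        rw [hxy]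
    · rintro k ⟨S, hdom, hconn, rfl⟩
      set A : Set V := Sum.inl ⁻¹' S with hA
      set B : Set T.edgeSet := Sum.inr ⁻¹' S with hB
      have hch : ∀ v ∈ Aᶜ, ∃ e ∈ B, v ∈ (e : Sym2 V) := by
        intro v hv
        obtain ⟨u, huS, hu⟩ := hdom (Sum.inl v)
        rcases hu with h | h
        · subst h; exact absurd huS hv
        · cases u with
          | inl w => exact h.elim
          | inr e => exact ⟨e, huS, h⟩
      choose f hfB hfmem using hch
      set F : V → T.edgeSet := fun v => if h : v ∈ Aᶜ then f v h else e0 with hF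
      have hmaps : ∀ v ∈ Aᶜ, F v ∈ B := by
        intro v hv; simp only [hF, dif_pos hv]; exact hfB v hv
      have hinj : Set.InjOn F Aᶜ := by
        intro v hv w hw hvw
        by_contra hne
        have hveq : F v = f v hv := by simp only [hF, dif_pos hv]
        have hweq : F w = f w hw := by simp only [hF, dif_pos hw]
        set e : T.edgeSet := f v hv with he
        have hvS : Sum.inr e ∈ S := hfB v hv
        have hvmem : v ∈ (e : Sym2 V) := hfmem v hv
        have hwmem : w ∈ (e : Sym2 V) := by
          have : f w hw = e := by rw [← hweq, ← hvw, hveq]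
          rw [← this]; exact hfmem w hw
        have heval : (e : Sym2 V) = s(v, w) := (Sym2.mem_and_mem_iff hne).mp ⟨hvmem, hwmem⟩
        have hTvw : T.Adj v w := by
          have := e.2; rw [heval] at this; exact this
        -- reachability in the complement of S
        have hv' : (Sum.inl v : V ⊕ T.edgeSet) ∈ Sᶜ := hv
        have hw' : (Sum.inl w : V ⊕ T.edgeSet) ∈ Sᶜ := hw
        obtain ⟨W⟩ := hconn.preconnected ⟨Sum.inl v, hv'⟩ ⟨Sum.inl w, hw'⟩
        have hreach : (subGraph T S).Reachable v w := walk_proj T S W rfl rfl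
        -- bridge
        have hbridge := SimpleGraph.isAcyclic_iff_forall_adj_isBridge.mp hT.IsAcyclic hTvw
        rw [SimpleGraph.isBridge_iff] at hbridge
        apply hbridge
        refine hreach.mono ?_
        rintro a b ⟨hab, e', he', hs'⟩
        have hTab : T.Adj a b := by
          have := e'.2; rw [he'] at this; exact this
        refine ⟨hTab, ?_⟩
        rw [SimpleGraph.fromEdgeSet_adj]
        rintro ⟨hmem, -⟩
        apply hs'
        have : e' = e := Subtype.ext (by rw [he', heval]; exact hmem)
        rw [this]; exact hvS
      have hAB : Aᶜ.ncard ≤ B.ncard :=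
        Set.ncard_le_ncard_of_injOn F hmaps hinj (Set.toFinite B)
      have hcardA : A.ncard + Aᶜ.ncard = n := by
        have h := Set.ncard_add_ncard_compl A
        rw [Nat.card_eq_fintype_card] at h
        exact h
      have hsplit : S.ncard = A.ncard + B.ncard := by
        have hS : S = Sum.inl '' A ∪ Sum.inr '' B := by
          ext x
          cases x with
          | inl v => simp [hA]
          | inr e => simp [hB]
        rw [hS, Set.ncard_union_eq (by
            rw [Set.disjoint_iff_forall_ne]
            rintro x ⟨a, -, rfl⟩ y ⟨b, -, rfl⟩
            simp) (Set.toFinite _) (Set.toFinite _),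
          Set.ncard_image_of_injective _ Sum.inl_injective,
          Set.ncard_image_of_injective _ Sum.inr_injective]
      omega
  omega
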